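/- Let G = (U, α) and H = (V, β) be two connected weighted graphs. Then any weight function γ on U × V that satisfies the transition coupling condition with respect to α and β also satisfies the marginal coupling condition; in particular, γ is a weight joining of α and β. -/
import Mathlib


open Finset

def IsWeightFunction {U : Type*} [Fintype U] (α : U → U → ℝ) : Prop :=
  (∀ u u', 0 ≤ α u u') ∧ (∀ u u', α u u' = α u' u) ∧ (∑ u, ∑ u', α u u' = 1)

noncomputable def marginal {U : Type*} [Fintype U] (α : U → U → ℝ) (u : U) : ℝ :=
  ∑ u', α u u'

def IsWeightJoining {U V : Type*} [Fintype U] [Fintype V]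
    (α : U → U → ℝ) (β : V → V → ℝ) (γ : U × V → U × V → ℝ) : Prop :=
  IsWeightFunction γ ∧
  (∀ u, ∑ v, marginal γ (u, v) = marginal α u) ∧
  (∀ v, ∑ u, marginal γ (u, v) = marginal β v) ∧
  (∀ u u' v, marginal α u * ∑ v', γ (u, v) (u', v') = α u u' * marginal γ (u, v)) ∧
  (∀ v v' u, marginal β v * ∑ u', γ (u, v) (u', v') = β v v' * marginal γ (u, v))

/-- A weighted graph `(U, α)` is connected if any two distinct vertices are joined by
a path of positive-weight edges. -/
def IsConnectedWeight {U : Type*} [Fintype U] (α : U → U → ℝ) : Prop :=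
  ∀ u u' : U, u ≠ u' → ∃ n, ∃ w : Fin (n + 1) → U, w 0 = u ∧ w (Fin.last n) = u' ∧
    ∀ i : Fin n, 0 < α (w i.castSucc) (w i.succ)

lemma marginal_pos_of_connected {U : Type*} [Fintype U] (α : U → U → ℝ)
    (hα : IsWeightFunction α) (hconn : IsConnectedWeight α) (u : U) :
    0 < marginal α u := by
  obtain ⟨hnn, hsymm, hsum⟩ := hα
  have hmnn : ∀ x : U, 0 ≤ marginal α x :=
    fun x => Finset.sum_nonneg fun _ _ => hnn _ _
  have htot : ∑ x : U, marginal α x = 1 := hsum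
  obtain ⟨u₀, hu₀⟩ : ∃ u₀ : U, 0 < marginal α u₀ := by
    by_contra h
    push_neg at h
    have h0 : ∑ x : U, marginal α x ≤ 0 := Finset.sum_nonpos fun x _ => h x
    rw [htot] at h0
    linarith
  by_cases he : u = u₀
  · exact he ▸ hu₀
  · obtain ⟨n, w, hw0, hwl, hpos⟩ := hconn u u₀ he
    cases n with
    | zero =>
      exact absurd (hw0.symm.trans hwl) he
    | succ m =>
      have h1 : 0 < α (w (0 : Fin (m+1)).castSucc) (w (0 : Fin (m+1)).succ) := hpos 0
      have h0 : w (0 : Fin (m+1)).castSucc = u := by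
        rw [← hw0]; rfl
      rw [h0] at h1
      have hle : α u (w (0 : Fin (m+1)).succ) ≤ marginal α u :=
        Finset.single_le_sum (fun x _ => hnn u x) (Finset.mem_univ _)
      linarith

lemma ratio_eq_of_connected {U : Type*} [Fintype U] (α : U → U → ℝ)
    (hconn : IsConnectedWeight α) (p R : U → ℝ) (hp : ∀ u, 0 < p u)
    (hedge : ∀ a b, 0 < α a b → R a * p b = R b * p a)
    (u u' : U) : R u * p u' = R u' * p u := by
  by_cases h : u = u'
  · subst h; rfl
  obtain ⟨n, w, hw0, hwl, hpos⟩ := hconn u u' h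
  have key : ∀ i : Fin (n+1), R (w 0) * p (w i) = R (w i) * p (w 0) := by
    intro i
    induction i using Fin.induction with
    | zero => rfl
    | succ j ih =>
      have h1 := hedge _ _ (hpos j)
      have hpj : p (w j.castSucc) ≠ 0 := ne_of_gt (hp _)
      have h2 : (R (w 0) * p (w j.succ)) * p (w j.castSucc) =
          (R (w j.succ) * p (w 0)) * p (w j.castSucc) := by
        linear_combination p (w j.succ) * ih + p (w 0) * h1
      exact mul_right_cancel₀ hpj h2
  have := key (Fin.last n)
  rw [hw0, hwl] at this
  exact this

/-- For connected weighted graphs `G = (U, α)` and `H = (V, β)`,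
any weight function `γ` on `U × V` satisfying the transition coupling condition
also satisfies the marginal coupling condition; in particular it is a weight joining. -/
theorem transition_coupling_implies_marginal_coupling
    {U V : Type*} [Fintype U] [Fintype V]
    (α : U → U → ℝ) (β : V → V → ℝ)
    (hα : IsWeightFunction α) (hβ : IsWeightFunction β)
    (hGconn : IsConnectedWeight α) (hHconn : IsConnectedWeight β)
    (γ : U × V → U × V → ℝ) (hγ : IsWeightFunction γ)
    (htrans₁ : ∀ u u' v, marginal α u * ∑ v', γ (u, v) (u', v') =
      α u u' * marginal γ (u, v))
    (htrans₂ : ∀ v v' u, marginal β v * ∑ u', γ (u, v) (u', v') =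
      β v v' * marginal γ (u, v)) :
    ((∀ u, ∑ v, marginal γ (u, v) = marginal α u) ∧
     (∀ v, ∑ u, marginal γ (u, v) = marginal β v)) ∧
    IsWeightJoining α β γ := by
  obtain ⟨hγnn, hγsymm, hγsum⟩ := hγ
  set p : U → ℝ := marginal α with hpdef
  set q : V → ℝ := marginal β with hqdef
  set R : U → ℝ := fun u => ∑ v, marginal γ (u, v) with hRdef
  set Q : V → ℝ := fun v => ∑ u, marginal γ (u, v) with hQdef
  have hp : ∀ u, 0 < p u := marginal_pos_of_connected α hα hGconn
  have hq : ∀ v, 0 < q v := marginal_pos_of_connected β hβ hHconn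
  have hpsum : ∑ u, p u = 1 := hα.2.2
  have hqsum : ∑ v, q v = 1 := hβ.2.2
  -- total mass of R and Q is 1
  have hRsum : ∑ u, R u = 1 := by
    have : ∑ u, R u = ∑ x : U × V, marginal γ x := by
      rw [Fintype.sum_prod_type]
    rw [this]
    exact hγsum
  have hQsum : ∑ v, Q v = 1 := by
    have : ∑ v, Q v = ∑ x : U × V, marginal γ x := by
      rw [Fintype.sum_prod_type]
      exact Finset.sum_comm
    rw [this]
    exact hγsum
  -- edge lemma for α
  have hedgeα : ∀ a b : U, 0 < α a b → R a * p b = R b * p a := by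
    intro a b hab
    have hS : (∑ v, ∑ v', γ (a, v) (b, v')) = ∑ v, ∑ v', γ (b, v) (a, v') := by
      rw [Finset.sum_comm]
      exact Finset.sum_congr rfl fun v _ => Finset.sum_congr rfl fun v' _ => hγsymm _ _
    have h1 : p a * (∑ v, ∑ v', γ (a, v) (b, v')) = α a b * R a := by
      rw [Finset.mul_sum, Finset.mul_sum]
      exact Finset.sum_congr rfl fun v _ => htrans₁ a b v
    have h2 : p b * (∑ v, ∑ v', γ (b, v) (a, v')) = α a b * R b := by
      rw [Finset.mul_sum, Finset.mul_sum]
      have := fun v => htrans₁ b a v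
      simp only [hα.2.1 b a] at this
      exact Finset.sum_congr rfl fun v _ => this v
    have h3 : α a b * (R a * p b) = α a b * (R b * p a) := by
      rw [← hS] at h2
      linear_combination p a * h2 - p b * h1
    exact mul_left_cancel₀ (ne_of_gt hab) h3
  -- edge lemma for β
  have hedgeβ : ∀ a b : V, 0 < β a b → Q a * q b = Q b * q a := by
    intro a b hab
    have hS : (∑ u, ∑ u', γ (u, a) (u', b)) = ∑ u, ∑ u', γ (u, b) (u', a) := by
      rw [Finset.sum_comm]
      exact Finset.sum_congr rfl fun u _ => Finset.sum_congr rfl fun u' _ => hγsymm _ _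
    have h1 : q a * (∑ u, ∑ u', γ (u, a) (u', b)) = β a b * Q a := by
      rw [Finset.mul_sum, Finset.mul_sum]
      exact Finset.sum_congr rfl fun u _ => htrans₂ a b u
    have h2 : q b * (∑ u, ∑ u', γ (u, b) (u', a)) = β a b * Q b := by
      rw [Finset.mul_sum, Finset.mul_sum]
      have := fun u => htrans₂ b a u
      simp only [hβ.2.1 b a] at this
      exact Finset.sum_congr rfl fun u _ => this u
    have h3 : β a b * (Q a * q b) = β a b * (Q b * q a) := by
      rw [← hS] at h2
      linear_combination q a * h2 - q b * h1
    exact mul_left_cancel₀ (ne_of_gt hab) h3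
  have hratioα := ratio_eq_of_connected α hGconn p R hp hedgeα
  have hratioβ := ratio_eq_of_connected β hHconn q Q hq hedgeβ
  have hmc₁ : ∀ u, R u = p u := by
    intro u
    have h1 : R u * (∑ u', p u') = (∑ u', R u') * p u := by
      rw [Finset.mul_sum, Finset.sum_mul]
      exact Finset.sum_congr rfl fun x _ => hratioα u x
    rw [hpsum, hRsum] at h1
    simpa using h1
  have hmc₂ : ∀ v, Q v = q v := by
    intro v
    have h1 : Q v * (∑ v', q v') = (∑ v', Q v') * q v := by
      rw [Finset.mul_sum, Finset.sum_mul]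
      exact Finset.sum_congr rfl fun x _ => hratioβ v x
    rw [hqsum, hQsum] at h1
    simpa using h1
  exact ⟨⟨hmc₁, hmc₂⟩, ⟨hγnn, hγsymm, hγsum⟩, hmc₁, hmc₂, htrans₁, htrans₂⟩
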